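/- Let g > 0, κ ≥ 0, τ > 0, ε > 0, and let A be a self-adjoint negative semidefinite operator on a finite-dimensional real inner product space. Given u⁰, û, F in the space and s⁰, ŝ ∈ ℝ, suppose u¹ and s¹ satisfy (u¹ - u⁰)/τ = ε²A((u¹ + u⁰)/2) + gF - κg((u¹ + u⁰)/2 - û) and (s¹ - s⁰)/τ = -g⟨F, (u¹ - u⁰)/τ⟩ + κg⟨(u¹ + u⁰)/2 - û, (u¹ - u⁰)/τ⟩. Then the modified energy E(u, s) := (ε²/2)⟨-Au, u⟩ + s satisfies E(u¹, s¹) - E(u⁰, s⁰) = -(1/τ)‖u¹ - u⁰‖² ≤ 0. -/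

import Mathlib

open RealInnerProductSpace

theorem stmt_18 {V : Type*} [NormedAddCommGroup V] [InnerProductSpace ℝ V]
    [FiniteDimensional ℝ V]
    (A : V →ₗ[ℝ] V) (hsa : ∀ x y : V, ⟪A x, y⟫ = ⟪x, A y⟫)
    (hneg : ∀ x : V, ⟪A x, x⟫ ≤ 0)
    (g κ τ ε : ℝ) (hg : 0 < g) (hκ : 0 ≤ κ) (hτ : 0 < τ) (hε : 0 < ε)
    (u0 u1 uhat F : V) (s0 s1 shat : ℝ)
    (hequ : (1 / τ) • (u1 - u0)
        = ε ^ 2 • A ((1 / 2 : ℝ) • (u1 + u0)) + g • F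
          - (κ * g) • ((1 / 2 : ℝ) • (u1 + u0) - uhat))
    (heqs : (s1 - s0) / τ
        = -g * ⟪F, (1 / τ) • (u1 - u0)⟫
          + κ * g * ⟪(1 / 2 : ℝ) • (u1 + u0) - uhat, (1 / τ) • (u1 - u0)⟫) :
    ((ε ^ 2 / 2) * ⟪-A u1, u1⟫ + s1) - ((ε ^ 2 / 2) * ⟪-A u0, u0⟫ + s0)
        = -(1 / τ) * ‖u1 - u0‖ ^ 2 ∧
      -(1 / τ) * ‖u1 - u0‖ ^ 2 ≤ 0 := by
  have hτ' : τ ≠ 0 := ne_of_gt hτ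
  have hc : ⟪A u1, u0⟫ = ⟪A u0, u1⟫ := by rw [hsa, real_inner_comm]
  have hcomm : ⟪u1, u0⟫ = ⟪u0, u1⟫ := real_inner_comm u0 u1
  have hN : ‖u1 - u0‖ ^ 2 = ‖u1‖ ^ 2 - 2 * ⟪u1, u0⟫ + ‖u0‖ ^ 2 :=
    norm_sub_sq_real u1 u0
  -- atomize the vector equation
  have h := congrArg (fun v => ⟪v, u1 - u0⟫) hequ
  simp only [inner_add_left, inner_sub_left, inner_add_right, inner_sub_right,
    real_inner_smul_left, real_inner_smul_right, map_add, map_smul, smul_add,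
    real_inner_self_eq_norm_sq] at h
  -- atomize the scalar equation
  simp only [inner_add_left, inner_sub_left, inner_add_right, inner_sub_right,
    real_inner_smul_left, real_inner_smul_right, smul_add,
    real_inner_self_eq_norm_sq] at heqs
  have h2 := congrArg (· * τ) heqs
  field_simp at h2
  have hs : s1 - s0
      = -g * (⟪F, u1⟫ - ⟪F, u0⟫)
        + κ * g * ((1/2) * (‖u1‖^2 - ‖u0‖^2) - (⟪uhat, u1⟫ - ⟪uhat, u0⟫)) := by
    have h3 : (s1 - s0) * (2 * τ^3)
        = (-g * (⟪F, u1⟫ - ⟪F, u0⟫)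
            + κ * g * ((1/2) * (‖u1‖^2 - ‖u0‖^2) - (⟪uhat, u1⟫ - ⟪uhat, u0⟫)))
          * (2 * τ^3) := by
      linear_combination τ^3 * h2 - (κ * g * τ^3) * hcomm
    exact mul_right_cancel₀ (by positivity) h3
  constructor
  · simp only [inner_neg_left]
    rw [hN]
    linear_combination h + hs - (ε^2/2) * hc + (κ*g/2 - 1/τ) * hcomm
  · have : (0:ℝ) ≤ (1 / τ) * ‖u1 - u0‖ ^ 2 := by positivity
    linarith
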